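/- Fix an integer j ≥ 0. Then c(n, n−j) = n^{2j}/(2^j·j!) + o(n^{2j}) as n → ∞; that is, c(n,n−j)·2^j·j!/n^{2j} → 1 as n → ∞. -/

import Mathlib

/-- The signless Stirling number of the first kind `c(n,j)`: the number of permutations of an
`n`-element set with exactly `j` orbits (disjoint cycles, fixed points counted as cycles). -/
noncomputable def stirC (n j : ℕ) : ℕ :=
  Nat.card {σ : Equiv.Perm (Fin n) // σ.cycleType.card + (n - σ.support.card) = j}

open Equiv Equiv.Perm Finset Filter

namespace StirAux

set_option linter.unusedSectionVars false
variable {α : Type*} [DecidableEq α] [Fintype α]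

lemma list_prod_apply_eq_self {l : List (Perm α)} {x : α} (h : ∀ τ ∈ l, τ x = x) :
    l.prod x = x := by
  induction l with
  | nil => rfl
  | cons a t ih =>
    rw [List.prod_cons, Perm.mul_apply, ih fun τ hτ => h τ (List.mem_cons_of_mem _ hτ)]
    exact h a List.mem_cons_self

lemma list_prod_apply_of_mem {l : List (Perm α)} (hl : l.Pairwise Equiv.Perm.Disjoint)
    {σ : Perm α} (hσ : σ ∈ l) {x : α} (hx : σ x ≠ x) : l.prod x = σ x := by
  induction l with
  | nil => simp at hσ
  | cons a t ih =>
    rw [List.pairwise_cons] at hl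
    rw [List.prod_cons, Perm.mul_apply]
    rcases List.mem_cons.mp hσ with rfl | hσt
    · rw [list_prod_apply_eq_self]
      intro τ hτ
      rcases (hl.1 τ hτ) x with h | h
      · exact absurd h hx
      · exact h
    · rw [ih hl.2 hσt]
      rcases (hl.1 σ hσt) (σ x) with h | h
      · exact h
      · exact absurd (σ.injective h) hx

variable {j : ℕ}

/-- The product of `j` transpositions read off an injection. -/
def swapList (e : Fin j × Bool ↪ α) : List (Perm α) :=
  List.ofFn fun i : Fin j => Equiv.swap (e (i, false)) (e (i, true))

def Phi (e : Fin j × Bool ↪ α) : Perm α := (swapList e).prod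

lemma e_ne (e : Fin j × Bool ↪ α) (i : Fin j) : e (i, false) ≠ e (i, true) := by
  intro h
  simpa using e.injective h

lemma swapList_pairwise (e : Fin j × Bool ↪ α) :
    (swapList e).Pairwise Equiv.Perm.Disjoint := by
  rw [swapList, List.pairwise_ofFn]
  intro i i' hii'
  rw [disjoint_iff_disjoint_support, support_swap (e_ne e i), support_swap (e_ne e i'),
    Finset.disjoint_left]
  intro x hx hx'
  simp only [Finset.mem_insert, Finset.mem_singleton] at hx hx'
  have : i = i' := by
    rcases hx with rfl | rfl <;> rcases hx' with h | h <;>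
      simpa using congrArg Prod.fst (e.injective h)
  exact absurd this hii'.ne

lemma mem_swapList (e : Fin j × Bool ↪ α) (i : Fin j) :
    Equiv.swap (e (i, false)) (e (i, true)) ∈ swapList e :=
  List.mem_ofFn.mpr ⟨i, rfl⟩

lemma swap_apply_pair (e : Fin j × Bool ↪ α) (i : Fin j) (b : Bool) :
    Equiv.swap (e (i, false)) (e (i, true)) (e (i, b)) = e (i, !b) := by
  cases b
  · simp [Equiv.swap_apply_left]
  · simp [Equiv.swap_apply_right]

lemma Phi_apply (e : Fin j × Bool ↪ α) (i : Fin j) (b : Bool) :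
    Phi e (e (i, b)) = e (i, !b) := by
  rw [Phi, list_prod_apply_of_mem (swapList_pairwise e) (mem_swapList e i),
    swap_apply_pair]
  rw [swap_apply_pair]
  intro h
  have := e.injective h
  simp at this

lemma cycleType_Phi (e : Fin j × Bool ↪ α) :
    (Phi e).cycleType = Multiset.replicate j 2 := by
  rw [Phi]
  rw [cycleType_eq (swapList e) rfl ?_ (swapList_pairwise e)]
  · rw [swapList, List.map_ofFn]
    have : ((Finset.card ∘ Equiv.Perm.support) ∘ fun i : Fin j =>
        Equiv.swap (e (i, false)) (e (i, true))) = fun _ => 2 := by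
      funext i
      simp [Function.comp, card_support_swap (e_ne e i)]
    rw [this, List.ofFn_const, Multiset.coe_replicate]
  · intro σ hσ
    rw [swapList, List.mem_ofFn] at hσ
    obtain ⟨i, rfl⟩ := hσ
    exact isCycle_swap (e_ne e i)

end StirAux

namespace StirAux2
open StirAux

variable {α : Type*} [DecidableEq α] [Fintype α] {j : ℕ} {σ : Equiv.Perm α}

lemma sq_eq_one (hσ : σ.cycleType = Multiset.replicate j 2) : σ * σ = 1 := by
  have h1 : orderOf σ ∣ 2 := by
    rw [← Equiv.Perm.lcm_cycleType, hσ]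
    apply Multiset.lcm_dvd.mpr
    intro b hb
    rw [Multiset.eq_of_mem_replicate hb]
  have := orderOf_dvd_iff_pow_eq_one.mp h1
  rwa [pow_two] at this

lemma support_card_eq (hσ : σ.cycleType = Multiset.replicate j 2) :
    σ.support.card = 2 * j := by
  rw [← Equiv.Perm.sum_cycleType, hσ, Multiset.sum_replicate, smul_eq_mul, mul_comm]

lemma sigma_apply_pair (hσ : σ.cycleType = Multiset.replicate j 2) {e : Fin j × Bool ↪ α}
    (h : ∀ i, σ (e (i, false)) = e (i, true)) : ∀ (i : Fin j) (b : Bool),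
    σ (e (i, b)) = e (i, !b) := by
  intro i b
  cases b
  · simpa using h i
  · calc σ (e (i, true)) = σ (σ (e (i, false))) := by rw [h i]
    _ = (σ * σ) (e (i, false)) := rfl
    _ = e (i, false) := by rw [sq_eq_one hσ]; rfl

lemma map_eq_support (hσ : σ.cycleType = Multiset.replicate j 2) (e : Fin j × Bool ↪ α)
    (h : ∀ i, σ (e (i, false)) = e (i, true)) :
    Finset.univ.map e = σ.support := by
  have hpair := sigma_apply_pair hσ h
  have hsub : Finset.univ.map e ⊆ σ.support := by
    intro x hx
    rw [Finset.mem_map] at hx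
    obtain ⟨⟨i, b⟩, -, rfl⟩ := hx
    rw [Equiv.Perm.mem_support, hpair i b]
    intro hcontra
    have := e.injective hcontra
    simp at this
  apply Finset.eq_of_subset_of_card_le hsub
  rw [support_card_eq hσ, Finset.card_map, Finset.card_univ, Fintype.card_prod,
    Fintype.card_fin, Fintype.card_bool]
  omega

lemma Phi_eq_iff (hσ : σ.cycleType = Multiset.replicate j 2) (e : Fin j × Bool ↪ α) :
    Phi e = σ ↔ ∀ i, σ (e (i, false)) = e (i, true) := by
  constructor
  · rintro rfl
    exact fun i => Phi_apply e i false
  · intro h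
    have hpair := sigma_apply_pair hσ h
    have hsupp := map_eq_support hσ e h
    ext x
    by_cases hx : x ∈ Finset.univ.map e
    · rw [Finset.mem_map] at hx
      obtain ⟨⟨i, b⟩, -, rfl⟩ := hx
      rw [Phi_apply, hpair]
    · have h1 : x ∉ (Phi e).support := by
        rw [← map_eq_support (cycleType_Phi e) e (fun i => Phi_apply e i false)]
        exact hx
      have h2 : x ∉ σ.support := hsupp ▸ hx
      rw [Equiv.Perm.notMem_support.mp h1, Equiv.Perm.notMem_support.mp h2]

lemma exists_fiber (hσ : σ.cycleType = Multiset.replicate j 2) :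
    ∃ e : Fin j × Bool ↪ α, Phi e = σ := by
  have hcard : σ.cycleFactorsFinset.card = j := by
    have h := congrArg Multiset.card hσ
    rw [Equiv.Perm.cycleType_def, Multiset.card_map, Multiset.card_replicate] at h
    exact h
  have hcyc : ∀ c : Equiv.Perm α, c ∈ σ.cycleFactorsFinset → c.IsCycle :=
    fun c hc => (Equiv.Perm.mem_cycleFactorsFinset_iff.mp hc).1
  choose pt hpt using fun c : {c // c ∈ σ.cycleFactorsFinset} =>
    (hcyc c c.2).nonempty_support
  set g := (Finset.equivFinOfCardEq hcard).symm with hg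
  have hptmem : ∀ c : {c // c ∈ σ.cycleFactorsFinset},
      σ (pt c) = (c : Equiv.Perm α) (pt c) :=
    fun c => ((Equiv.Perm.mem_cycleFactorsFinset_iff.mp c.2).2 (pt c) (hpt c)).symm
  have hmem2 : ∀ c : {c // c ∈ σ.cycleFactorsFinset},
      σ (pt c) ∈ (c : Equiv.Perm α).support := by
    intro c
    rw [hptmem c]
    exact Equiv.Perm.apply_mem_support.mpr (hpt c)
  have hne : ∀ c : {c // c ∈ σ.cycleFactorsFinset}, σ (pt c) ≠ pt c := by
    intro c
    rw [hptmem c]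
    exact Equiv.Perm.mem_support.mp (hpt c)
  set f : Fin j × Bool → α := fun p => cond p.2 (σ (pt (g p.1))) (pt (g p.1)) with hf
  have hfmem : ∀ p : Fin j × Bool, f p ∈ ((g p.1 : Equiv.Perm α)).support := by
    rintro ⟨i, b⟩
    cases b
    · exact hpt (g i)
    · exact hmem2 (g i)
  have hinj : Function.Injective f := by
    rintro ⟨i, b⟩ ⟨i', b'⟩ hpp
    have hgi : g i = g i' := by
      by_contra hne'
      have hdisj : Equiv.Perm.Disjoint (g i : Equiv.Perm α) (g i' : Equiv.Perm α) :=
        Equiv.Perm.cycleFactorsFinset_pairwise_disjoint σ (g i).2 (g i').2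
          (fun hc => hne' (Subtype.ext hc))
      have := Equiv.Perm.disjoint_iff_disjoint_support.mp hdisj
      exact Finset.disjoint_left.mp this (hfmem (i, b)) (hpp ▸ hfmem (i', b'))
    have hii : i = i' := g.injective hgi
    subst hii
    have hbb : b = b' := by
      by_contra hbb2
      have hb' : b' = !b := by cases b <;> cases b' <;> simp_all
      rw [hb'] at hpp
      cases b
      · exact hne (g i) (by simpa [hf] using hpp.symm)
      · exact hne (g i) (by simpa [hf] using hpp)
    rw [hbb]
  refine ⟨⟨f, hinj⟩, (Phi_eq_iff hσ _).mpr fun i => rfl⟩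

end StirAux2

namespace StirAux3
open StirAux StirAux2

variable {j : ℕ}

/-- toggle second coordinate -/
def tog : Fin j × Bool → Fin j × Bool := fun p => (p.1, !p.2)

/-- the "hyperoctahedral" subgroup as a subtype -/
def HH (j : ℕ) := {π : Equiv.Perm (Fin j × Bool) // ∀ i : Fin j, π (i, true) = tog (π (i, false))}

noncomputable instance : Fintype (HH j) := by
  unfold HH
  classical
  infer_instance

def theta (gb : (Fin j ≃ Fin j) × (Fin j → Bool)) : HH j :=
  ⟨{ toFun := fun p => (gb.1 p.1, xor (gb.2 p.1) p.2)
     invFun := fun p => (gb.1.symm p.1, xor (gb.2 (gb.1.symm p.1)) p.2)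
     left_inv := by rintro ⟨i, c⟩; simp [Bool.xor_assoc]
     right_inv := by rintro ⟨i, c⟩; simp [Bool.xor_assoc] },
   by intro i; simp [tog, Equiv.coe_fn_mk]⟩

lemma theta_bijective : Function.Bijective (theta (j := j)) := by
  constructor
  · rintro ⟨g, b⟩ ⟨g', b'⟩ h
    have h' : ∀ p : Fin j × Bool, (g p.1, xor (b p.1) p.2) = (g' p.1, xor (b' p.1) p.2) := by
      intro p
      exact congrFun (congrArg (fun (π : HH j) => (π.1 : Fin j × Bool → Fin j × Bool)) h) p
    have hg : g = g' := by
      apply Equiv.ext; intro i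
      exact congrArg Prod.fst (h' (i, false))
    have hb : b = b' := by
      funext i
      have := congrArg Prod.snd (h' (i, false))
      simpa using this
    rw [Prod.mk.injEq]; exact ⟨hg, hb⟩
  · rintro ⟨π, hπ⟩
    set g₀ : Fin j → Fin j := fun i => (π (i, false)).1 with hg₀
    set b : Fin j → Bool := fun i => (π (i, false)).2 with hb
    have hg₀inj : Function.Injective g₀ := by
      intro i i' h
      by_cases hbb : b i = b i'
      · have : π (i, false) = π (i', false) := Prod.ext h hbb
        simpa using congrArg Prod.fst (π.injective this)
      · have hb' : b i = !b i' := by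
          cases hc : b i <;> cases hc' : b i' <;> simp_all
        have : π (i, false) = π (i', true) := by
          rw [hπ i']
          apply Prod.ext
          · exact h
          · exact hb'
        have := π.injective this
        simp at this
    have hg₀bij := Finite.injective_iff_bijective.mp hg₀inj
    refine ⟨⟨Equiv.ofBijective g₀ hg₀bij, b⟩, ?_⟩
    apply Subtype.ext
    apply Equiv.ext
    rintro ⟨i, c⟩
    show ((Equiv.ofBijective g₀ hg₀bij) i, xor (b i) c) = π (i, c)
    cases c
    · simp [hg₀, hb]
    · rw [hπ i]
      simp [tog, hg₀, hb]

lemma card_HH : Fintype.card (HH j) = Nat.factorial j * 2 ^ j := by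
  classical
  rw [← Fintype.card_congr (Equiv.ofBijective theta theta_bijective)]
  rw [Fintype.card_prod, Fintype.card_equiv (Equiv.refl (Fin j)), Fintype.card_fun]
  simp

end StirAux3

namespace StirAux4
open StirAux StirAux2 StirAux3

variable {α : Type*} [DecidableEq α] [Fintype α] {j : ℕ} {σ : Equiv.Perm α}

lemma card_fiber (hσ : σ.cycleType = Multiset.replicate j 2) :
    Nat.card {e : Fin j × Bool ↪ α // Phi e = σ} = 2 ^ j * j.factorial := by
  obtain ⟨e₀, he₀⟩ := exists_fiber hσ
  have h₀ : ∀ i, σ (e₀ (i, false)) = e₀ (i, true) := (Phi_eq_iff hσ e₀).mp he₀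
  have h₀' := sigma_apply_pair hσ h₀
  have h₀t : ∀ q : Fin j × Bool, σ (e₀ q) = e₀ (tog q) := by
    rintro ⟨k, c⟩
    exact h₀' k c
  let Ψ : HH j → {e : Fin j × Bool ↪ α // Phi e = σ} := fun π =>
    ⟨⟨fun p => e₀ (π.1 p), e₀.injective.comp π.1.injective⟩, by
      rw [Phi_eq_iff hσ]
      intro i
      show σ (e₀ (π.1 (i, false))) = e₀ (π.1 (i, true))
      rw [π.2 i, h₀t]⟩
  have hbij : Function.Bijective Ψ := by
    constructor
    · intro π π' h
      apply Subtype.ext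
      apply Equiv.ext
      intro p
      have : e₀ (π.1 p) = e₀ (π'.1 p) :=
        congrFun (congrArg (fun E : {e : Fin j × Bool ↪ α // Phi e = σ} =>
          (E.1 : Fin j × Bool → α)) h) p
      exact e₀.injective this
    · rintro ⟨e, he⟩
      have hei : ∀ i, σ (e (i, false)) = e (i, true) := (Phi_eq_iff hσ e).mp he
      have hmape := map_eq_support hσ e hei
      have hmape₀ := map_eq_support hσ e₀ h₀
      have hex : ∀ p : Fin j × Bool, ∃ q, e₀ q = e p := by
        intro p
        have hmem : e p ∈ Finset.univ.map e₀ := by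
          rw [hmape₀, ← hmape]
          exact Finset.mem_map_of_mem e (Finset.mem_univ p)
        rw [Finset.mem_map] at hmem
        obtain ⟨q, -, hq⟩ := hmem
        exact ⟨q, hq⟩
      choose π₀ hπ₀ using hex
      have hπinj : Function.Injective π₀ := fun p p' h' =>
        e.injective (by rw [← hπ₀ p, ← hπ₀ p', h'])
      refine ⟨⟨Equiv.ofBijective π₀ (Finite.injective_iff_bijective.mp hπinj), ?_⟩, ?_⟩
      · intro i
        apply e₀.injective
        show e₀ (π₀ (i, true)) = e₀ (tog (π₀ (i, false)))
        rw [hπ₀ (i, true), ← h₀t, hπ₀ (i, false), hei i]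
      · apply Subtype.ext
        apply DFunLike.ext
        intro p
        exact hπ₀ p
  calc Nat.card {e : Fin j × Bool ↪ α // Phi e = σ}
      = Nat.card (HH j) := (Nat.card_eq_of_bijective Ψ hbij).symm
    _ = 2 ^ j * j.factorial := by
        rw [Nat.card_eq_fintype_card, card_HH, mul_comm]

lemma count_replicate (n j : ℕ) :
    (Finset.univ.filter fun σ : Equiv.Perm (Fin n) =>
      σ.cycleType = Multiset.replicate j 2).card * (2 ^ j * j.factorial)
      = n.descFactorial (2 * j) := by
  classical
  have hcard : Fintype.card (Fin j × Bool ↪ Fin n) = n.descFactorial (2 * j) := by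
    rw [Fintype.card_embedding_eq, Fintype.card_prod, Fintype.card_fin,
      Fintype.card_bool, Fintype.card_fin, mul_comm j 2]
  rw [← hcard, ← Finset.card_univ,
    Finset.card_eq_sum_card_fiberwise (f := Phi)
      (t := Finset.univ.filter fun σ : Equiv.Perm (Fin n) =>
        σ.cycleType = Multiset.replicate j 2)
      (fun e _ => Finset.mem_filter.mpr ⟨Finset.mem_univ _, cycleType_Phi e⟩)]
  rw [Finset.sum_congr rfl (fun σ hσ => ?_), Finset.sum_const, smul_eq_mul]
  have hσ' : σ.cycleType = Multiset.replicate j 2 := (Finset.mem_filter.mp hσ).2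
  calc (Finset.univ.filter fun e : Fin j × Bool ↪ Fin n => Phi e = σ).card
      = Fintype.card {e : Fin j × Bool ↪ Fin n // Phi e = σ} :=
        (Fintype.card_subtype _).symm
    _ = Nat.card {e : Fin j × Bool ↪ Fin n // Phi e = σ} :=
        Nat.card_eq_fintype_card.symm
    _ = 2 ^ j * j.factorial := card_fiber hσ'

end StirAux4

namespace StirAux5

lemma card_small_support_le (n m : ℕ) (hn : 1 ≤ n) :
    (Finset.univ.filter fun σ : Equiv.Perm (Fin n) => σ.support.card ≤ m).card
      ≤ ((m + 1) * n ^ m) * m.factorial := by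
  classical
  have hsets : (Finset.univ.filter fun s : Finset (Fin n) => s.card ≤ m).card
      ≤ (m + 1) * n ^ m := by
    rw [Finset.card_eq_sum_card_fiberwise (f := Finset.card) (t := Finset.range (m + 1))
      (fun s hs => Finset.mem_range.mpr (Nat.lt_succ_of_le (Finset.mem_filter.mp hs).2))]
    calc ∑ k ∈ Finset.range (m + 1),
          ((Finset.univ.filter fun s : Finset (Fin n) => s.card ≤ m).filter
            fun s => s.card = k).card
        ≤ ∑ _k ∈ Finset.range (m + 1), n ^ m := by
          apply Finset.sum_le_sum
          intro k hk
          calc ((Finset.univ.filter fun s : Finset (Fin n) => s.card ≤ m).filter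
                fun s => s.card = k).card
              ≤ (Finset.powersetCard k (Finset.univ : Finset (Fin n))).card := by
                apply Finset.card_le_card
                intro s hs
                rw [Finset.mem_powersetCard_univ]
                exact (Finset.mem_filter.mp hs).2
            _ = n.choose k := by
                rw [Finset.card_powersetCard, Finset.card_univ, Fintype.card_fin]
            _ ≤ n ^ k := Nat.choose_le_pow _ _
            _ ≤ n ^ m := Nat.pow_le_pow_right hn (by
                have := Finset.mem_range.mp hk
                omega)
      _ = (m + 1) * n ^ m := by rw [Finset.sum_const, Finset.card_range, smul_eq_mul]
  let F : {σ : Equiv.Perm (Fin n) // σ.support.card ≤ m} →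
      (Σ s : {s : Finset (Fin n) // s.card ≤ m}, Equiv.Perm {x // x ∈ s.1}) := fun σ =>
    ⟨⟨σ.1.support, σ.2⟩, σ.1.subtypePerm fun x => Equiv.Perm.apply_mem_support⟩
  let G : (Σ s : {s : Finset (Fin n) // s.card ≤ m}, Equiv.Perm {x // x ∈ s.1}) →
      Fin n → Fin n := fun t x => if h : x ∈ t.1.1 then (t.2 ⟨x, h⟩ : Fin n) else x
  have hGF : ∀ σ : {σ : Equiv.Perm (Fin n) // σ.support.card ≤ m}, G (F σ) = ⇑σ.1 := by
    intro σ
    funext x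
    show (if h : x ∈ σ.1.support then ((σ.1.subtypePerm
        (p := fun x => x ∈ σ.1.support)
        (fun x => Equiv.Perm.apply_mem_support)) ⟨x, h⟩ : Fin n) else x) = σ.1 x
    by_cases hx : x ∈ σ.1.support
    · rw [dif_pos hx]
      rfl
    · rw [dif_neg hx]
      exact (Equiv.Perm.notMem_support.mp hx).symm
  have hinj : Function.Injective F := by
    intro a b hab
    have h2 : ⇑(a.1) = ⇑(b.1) := by rw [← hGF a, ← hGF b, hab]
    exact Subtype.ext (Equiv.coe_fn_injective h2)
  calc (Finset.univ.filter fun σ : Equiv.Perm (Fin n) => σ.support.card ≤ m).card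
      = Fintype.card {σ : Equiv.Perm (Fin n) // σ.support.card ≤ m} :=
        (Fintype.card_subtype _).symm
    _ ≤ Fintype.card (Σ s : {s : Finset (Fin n) // s.card ≤ m}, Equiv.Perm {x // x ∈ s.1}) :=
        Fintype.card_le_of_injective F hinj
    _ = ∑ s : {s : Finset (Fin n) // s.card ≤ m}, (s.1.card).factorial := by
        rw [Fintype.card_sigma]
        apply Finset.sum_congr rfl
        intro s _
        rw [Fintype.card_perm, Fintype.card_coe]
    _ ≤ ∑ _s : {s : Finset (Fin n) // s.card ≤ m}, m.factorial :=
        Finset.sum_le_sum fun s _ => Nat.factorial_le s.2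
    _ = Fintype.card {s : Finset (Fin n) // s.card ≤ m} * m.factorial := by
        rw [Finset.sum_const, Finset.card_univ, smul_eq_mul]
    _ = (Finset.univ.filter fun s : Finset (Fin n) => s.card ≤ m).card * m.factorial := by
        rw [Fintype.card_subtype]
    _ ≤ ((m + 1) * n ^ m) * m.factorial := Nat.mul_le_mul_right _ hsets

end StirAux5

namespace StirAux6
open StirAux StirAux2 StirAux3 StirAux4 StirAux5

lemma multiset_all_two {s : Multiset ℕ} (h2 : ∀ x ∈ s, 2 ≤ x)
    (hsum : s.sum = 2 * Multiset.card s) : s = Multiset.replicate (Multiset.card s) 2 := by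
  apply Multiset.eq_replicate.mpr ⟨rfl, ?_⟩
  intro b hb
  by_contra hb2
  have h3 : 3 ≤ b := by
    have := h2 b hb
    omega
  have hse : s = b ::ₘ s.erase b := (Multiset.cons_erase hb).symm
  have hsum' : s.sum = b + (s.erase b).sum := by
    conv_lhs => rw [hse]
    rw [Multiset.sum_cons]
  have hcard : Multiset.card s = Multiset.card (s.erase b) + 1 := by
    conv_lhs => rw [hse]
    rw [Multiset.card_cons]
  have hlow : Multiset.card (s.erase b) • 2 ≤ (s.erase b).sum :=
    Multiset.card_nsmul_le_sum fun x hx => h2 x (Multiset.mem_of_mem_erase hx)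
  rw [smul_eq_mul] at hlow
  omega

lemma two_mul_card_le {n : ℕ} (σ : Equiv.Perm (Fin n)) :
    2 * Multiset.card σ.cycleType ≤ σ.support.card := by
  rw [← Equiv.Perm.sum_cycleType]
  have := Multiset.card_nsmul_le_sum (s := σ.cycleType) (a := 2)
    fun x hx => Equiv.Perm.two_le_of_mem_cycleType hx
  rw [smul_eq_mul] at this
  omega

lemma support_le_of_ne {n j : ℕ} (hn : 2 * j ≤ n) (σ : Equiv.Perm (Fin n))
    (hA : Multiset.card σ.cycleType + (n - σ.support.card) = n - j)
    (hne : σ.cycleType ≠ Multiset.replicate j 2) :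
    σ.support.card + 1 ≤ 2 * j := by
  have h2t := two_mul_card_le σ
  have hsn : σ.support.card ≤ n := by
    have := Finset.card_le_univ σ.support
    rwa [Fintype.card_fin] at this
  have hst : σ.support.card = Multiset.card σ.cycleType + j := by omega
  by_cases hs2 : σ.support.card = 2 * j
  · exfalso
    have htj : Multiset.card σ.cycleType = j := by omega
    have hsum : σ.cycleType.sum = 2 * Multiset.card σ.cycleType := by
      rw [Equiv.Perm.sum_cycleType, hs2, htj]
    have := multiset_all_two (fun x hx => Equiv.Perm.two_le_of_mem_cycleType hx) hsum
    rw [htj] at this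
    exact hne this
  · omega

lemma replicate_mem_A {n j : ℕ} (hn : 2 * j ≤ n) (σ : Equiv.Perm (Fin n))
    (hσ : σ.cycleType = Multiset.replicate j 2) :
    Multiset.card σ.cycleType + (n - σ.support.card) = n - j := by
  have hs := StirAux2.support_card_eq hσ
  rw [hσ, Multiset.card_replicate, hs]
  omega

open Finset in
lemma stirC_split (n j : ℕ) (hn : 2 * j ≤ n) :
    stirC n (n - j)
      = (univ.filter fun σ : Equiv.Perm (Fin n) =>
          σ.cycleType = Multiset.replicate j 2).card
        + (univ.filter fun σ : Equiv.Perm (Fin n) =>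
            (Multiset.card σ.cycleType + (n - σ.support.card) = n - j) ∧
              σ.cycleType ≠ Multiset.replicate j 2).card := by
  classical
  have h1 : stirC n (n - j) = (univ.filter fun σ : Equiv.Perm (Fin n) =>
      Multiset.card σ.cycleType + (n - σ.support.card) = n - j).card := by
    rw [stirC, Nat.card_eq_fintype_card, Fintype.card_subtype]
  rw [h1]
  have h2 := Finset.card_filter_add_card_filter_not
    (s := univ.filter fun σ : Equiv.Perm (Fin n) =>
      Multiset.card σ.cycleType + (n - σ.support.card) = n - j)
    (p := fun σ => σ.cycleType = Multiset.replicate j 2)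
  rw [Finset.filter_filter, Finset.filter_filter] at h2
  rw [← h2]
  congr 1
  apply congrArg
  ext σ
  simp only [Finset.mem_filter, Finset.mem_univ, true_and]
  exact ⟨fun h => h.2, fun h => ⟨replicate_mem_A hn σ h, h⟩⟩

end StirAux6

namespace StirAux7
open StirAux StirAux2 StirAux5 StirAux6 Finset

lemma err_le (n j : ℕ) (hn1 : 1 ≤ n) (hn : 2 * j ≤ n) :
    (univ.filter fun σ : Equiv.Perm (Fin n) =>
      (Multiset.card σ.cycleType + (n - σ.support.card) = n - j) ∧
        σ.cycleType ≠ Multiset.replicate j 2).card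
    ≤ 2 * j * (2 * j - 1).factorial * n ^ (2 * j - 1) := by
  classical
  rcases Nat.eq_zero_or_pos j with rfl | hj
  · have hempty : (univ.filter fun σ : Equiv.Perm (Fin n) =>
        (Multiset.card σ.cycleType + (n - σ.support.card) = n - 0) ∧
          σ.cycleType ≠ Multiset.replicate 0 2).card = 0 := by
      rw [Finset.card_eq_zero, Finset.filter_eq_empty_iff]
      intro σ _
      rintro ⟨hA, hne⟩
      have h2t := two_mul_card_le σ
      have hsn : σ.support.card ≤ n := by
        have := Finset.card_le_univ σ.support
        rwa [Fintype.card_fin] at this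
      have hc0 : Multiset.card σ.cycleType = 0 := by omega
      apply hne
      rw [Multiset.card_eq_zero.mp hc0]
      simp
    rw [hempty]
    exact Nat.zero_le _
  · calc (univ.filter fun σ : Equiv.Perm (Fin n) =>
        (Multiset.card σ.cycleType + (n - σ.support.card) = n - j) ∧
          σ.cycleType ≠ Multiset.replicate j 2).card
        ≤ (univ.filter fun σ : Equiv.Perm (Fin n) => σ.support.card ≤ 2 * j - 1).card := by
          apply Finset.card_le_card
          intro σ hσ
          rw [Finset.mem_filter] at hσ ⊢
          refine ⟨Finset.mem_univ _, ?_⟩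
          have := support_le_of_ne hn σ hσ.2.1 hσ.2.2
          omega
      _ ≤ ((2 * j - 1 + 1) * n ^ (2 * j - 1)) * (2 * j - 1).factorial :=
          card_small_support_le n (2 * j - 1) hn1
      _ = 2 * j * (2 * j - 1).factorial * n ^ (2 * j - 1) := by
          have h1 : 2 * j - 1 + 1 = 2 * j := by omega
          rw [h1]
          ring

lemma key_bounds (j n : ℕ) (hn : 2 * j + 1 ≤ n) :
    n.descFactorial (2 * j) ≤ stirC n (n - j) * (2 ^ j * j.factorial) ∧
    stirC n (n - j) * (2 ^ j * j.factorial)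
      ≤ n.descFactorial (2 * j)
        + (2 * j * (2 * j - 1).factorial * (2 ^ j * j.factorial)) * n ^ (2 * j - 1) := by
  classical
  have hsplit := stirC_split n j (by omega)
  have hcount := StirAux4.count_replicate n j
  have herr := err_le n j (by omega) (by omega)
  constructor
  · rw [hsplit, add_mul, hcount]
    exact Nat.le_add_right _ _
  · rw [hsplit, add_mul, hcount]
    apply Nat.add_le_add_left
    calc (univ.filter fun σ : Equiv.Perm (Fin n) =>
          (Multiset.card σ.cycleType + (n - σ.support.card) = n - j) ∧
            σ.cycleType ≠ Multiset.replicate j 2).card * (2 ^ j * j.factorial)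
        ≤ (2 * j * (2 * j - 1).factorial * n ^ (2 * j - 1)) * (2 ^ j * j.factorial) :=
          Nat.mul_le_mul_right _ herr
      _ = (2 * j * (2 * j - 1).factorial * (2 ^ j * j.factorial)) * n ^ (2 * j - 1) := by
          ring

end StirAux7



set_option maxHeartbeats 1000000 in
open StirAux StirAux7 Finset Filter in
/-- For fixed `j ≥ 0`, `c(n,n−j) = n^{2j}/(2^j·j!) + o(n^{2j})` as `n → ∞`;
i.e. `c(n,n−j)·2^j·j!/n^{2j} → 1`. -/
theorem stirling_first_kind_asymptotic (j : ℕ) :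
    Filter.Tendsto
      (fun n : ℕ => (stirC n (n - j) : ℚ) * 2 ^ j * (j.factorial : ℚ) / (n : ℚ) ^ (2 * j))
      Filter.atTop (nhds 1) := by
  classical
  set C : ℕ := 2 * j * (2 * j - 1).factorial * (2 ^ j * j.factorial) with hC
  set L : ℕ → ℚ := fun n => (n.descFactorial (2 * j) : ℚ) / (n : ℚ) ^ (2 * j) with hL
  have hinv : Tendsto (fun n : ℕ => ((n : ℚ))⁻¹) atTop (nhds 0) :=
    tendsto_natCast_atTop_atTop.inv_tendsto_atTop
  have hLtend : Tendsto L atTop (nhds 1) := by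
    have h1 : ∀ i ∈ Finset.range (2 * j),
        Tendsto (fun n : ℕ => 1 - (i : ℚ) * ((n : ℚ))⁻¹) atTop (nhds (1 - (i : ℚ) * 0)) :=
      fun i _ => tendsto_const_nhds.sub (hinv.const_mul (i : ℚ))
    have hprod := tendsto_finset_prod (Finset.range (2 * j)) h1
    simp only [mul_zero, sub_zero, Finset.prod_const_one] at hprod
    apply hprod.congr'
    filter_upwards [eventually_ge_atTop (2 * j + 1)] with n hn
    have hn0 : (n : ℚ) ≠ 0 := Nat.cast_ne_zero.mpr (by omega)
    rw [hL]
    simp only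
    rw [Nat.descFactorial_eq_prod_range, Nat.cast_prod]
    have hcast : ∀ i ∈ Finset.range (2 * j), ((n - i : ℕ) : ℚ) = (n : ℚ) - i := by
      intro i hi
      have hin : i ≤ n := by
        have := Finset.mem_range.mp hi
        omega
      push_cast [Nat.cast_sub hin]
      ring
    rw [Finset.prod_congr rfl hcast]
    have hpow : (n : ℚ) ^ (2 * j) = ∏ _i ∈ Finset.range (2 * j), (n : ℚ) := by
      rw [Finset.prod_const, Finset.card_range]
    rw [hpow, ← Finset.prod_div_distrib]
    apply Finset.prod_congr rfl
    intro i _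
    field_simp
  have hUtend : Tendsto (fun n : ℕ => L n + (C : ℚ) * ((n : ℚ))⁻¹) atTop (nhds 1) := by
    have := hLtend.add (hinv.const_mul (C : ℚ))
    simpa using this
  apply tendsto_of_tendsto_of_tendsto_of_le_of_le' hLtend hUtend
  · -- lower bound
    filter_upwards [eventually_ge_atTop (2 * j + 1)] with n hn
    have hkey := (key_bounds j n hn).1
    have hpow : (0 : ℚ) ≤ (n : ℚ) ^ (2 * j) := by positivity
    have hXeq : (stirC n (n - j) : ℚ) * 2 ^ j * (j.factorial : ℚ)
        = ((stirC n (n - j) * (2 ^ j * j.factorial) : ℕ) : ℚ) := by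
      push_cast
      ring
    rw [hL]
    simp only
    rw [hXeq]
    gcongr
  · -- upper bound
    filter_upwards [eventually_ge_atTop (2 * j + 1)] with n hn
    have hkey := (key_bounds j n hn).2
    have hn0 : (n : ℚ) ≠ 0 := Nat.cast_ne_zero.mpr (by omega)
    have hXeq : (stirC n (n - j) : ℚ) * 2 ^ j * (j.factorial : ℚ)
        = ((stirC n (n - j) * (2 ^ j * j.factorial) : ℕ) : ℚ) := by
      push_cast
      ring
    have hterm : (C : ℚ) * (n : ℚ) ^ (2 * j - 1) / (n : ℚ) ^ (2 * j)
        ≤ (C : ℚ) * ((n : ℚ))⁻¹ := by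
      rcases Nat.eq_zero_or_pos j with rfl | hj
      · have hC0 : C = 0 := by
          rw [hC]
          norm_num
        rw [hC0]
        simp
      · have h2j : 2 * j = (2 * j - 1) + 1 := by omega
        have hk0 : (n : ℚ) ^ (2 * j - 1) ≠ 0 := pow_ne_zero _ hn0
        rw [h2j, pow_succ]
        apply le_of_eq
        field_simp
        try ring
        rw [Nat.add_sub_cancel_left]
    calc (stirC n (n - j) : ℚ) * 2 ^ j * (j.factorial : ℚ) / (n : ℚ) ^ (2 * j)
        = ((stirC n (n - j) * (2 ^ j * j.factorial) : ℕ) : ℚ) / (n : ℚ) ^ (2 * j) := by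
          rw [hXeq]
      _ ≤ ((n.descFactorial (2 * j) + C * n ^ (2 * j - 1) : ℕ) : ℚ) / (n : ℚ) ^ (2 * j) := by
          gcongr
      _ = L n + (C : ℚ) * (n : ℚ) ^ (2 * j - 1) / (n : ℚ) ^ (2 * j) := by
          rw [hL]
          push_cast
          rw [add_div]
      _ ≤ L n + (C : ℚ) * ((n : ℚ))⁻¹ := add_le_add_right hterm _
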